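/- Let n, m be positive integers, let w ∈ ℝⁿ be a probability vector (wᵢ ≥ 0, Σᵢ wᵢ = 1), and let c ∈ ℝᵐ. For each consumer type i ∈ {1,…,n} and each product j ∈ {1,…,m}, let v_{ij} : ℝ → ℝ be three times continuously differentiable with v_{ij}''(k) ≤ −1 and v_{ij}'''(k) ≤ 2 for every k, and let g_{ij} : ℝ → ℝ be differentiable on an open interval containing [c_j, c_j + 1] with v_{ij}'(g_{ij}(p)) = p there. Then the total expected revenue F(p) = Σⱼ Σᵢ wᵢ · g_{ij}(p_j) · (p_j − c_j) is a concave function of p on the box Πⱼ [c_j, c_j + 1] ⊆ ℝᵐ. -/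

import Mathlib

lemma myConcaveOn_sum {ι : Type*} {E : Type*} [AddCommGroup E] [Module ℝ E]
    (t : Finset ι) (s : Set E) (hs : Convex ℝ s) (f : ι → E → ℝ)
    (h : ∀ i ∈ t, ConcaveOn ℝ s (f i)) :
    ConcaveOn ℝ s (fun x => ∑ i ∈ t, f i x) := by
  classical
  induction t using Finset.induction with
  | empty => simpa using concaveOn_const 0 hs
  | insert _ _ hnot ih =>
    rename_i a t'
    simp only [Finset.sum_insert hnot]
    exact (h a (Finset.mem_insert_self a t')).add
      (ih fun i hi => h i (Finset.mem_insert_of_mem hi))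



lemma key (cj : ℝ) (v g : ℝ → ℝ) (hv : ContDiff ℝ 3 v)
    (hv'' : ∀ k, iteratedDeriv 2 v k ≤ -1) (hv''' : ∀ k, iteratedDeriv 3 v k ≤ 2)
    (a b : ℝ) (ha : a < cj) (hb : cj + 1 < b)
    (hgd : ∀ p ∈ Set.Ioo a b, DifferentiableAt ℝ g p)
    (hvg : ∀ p ∈ Set.Ioo a b, deriv v (g p) = p) :
    ConcaveOn ℝ (Set.Icc cj (cj + 1)) (fun p => g p * (p - cj)) := by
  have hab : Set.Icc cj (cj + 1) ⊆ Set.Ioo a b := fun x hx =>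
    ⟨lt_of_lt_of_le ha hx.1, lt_of_le_of_lt hx.2 hb⟩
  set D2 : ℝ → ℝ := deriv (deriv v) with hD2def
  set D3 : ℝ → ℝ := deriv D2 with hD3def
  have h2eq : ∀ k, iteratedDeriv 2 v k = D2 k := by
    intro k
    rw [show (2:ℕ) = 1 + 1 from rfl, iteratedDeriv_succ, iteratedDeriv_one]
  have h3eq : ∀ k, iteratedDeriv 3 v k = D3 k := by
    intro k
    rw [show (3:ℕ) = 2 + 1 from rfl, iteratedDeriv_succ]
    congr 1
    funext x
    exact h2eq x
  have hA : ∀ k, D2 k ≤ -1 := fun k => h2eq k ▸ hv'' k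
  have hB : ∀ k, D3 k ≤ 2 := fun k => h3eq k ▸ hv''' k
  have hAne : ∀ k, D2 k ≠ 0 := fun k => ne_of_lt (lt_of_le_of_lt (hA k) (by norm_num))
  -- D2 is differentiable
  have hvc : ContDiff ℝ 2 (deriv v) := by
    have := (contDiff_succ_iff_deriv (n := 2)).mp (by exact_mod_cast hv)
    exact this.2.2
  have hD2c : ContDiff ℝ 1 D2 := by
    have := (contDiff_succ_iff_deriv (n := 1)).mp (by exact_mod_cast hvc)
    exact this.2.2
  have hD2diff : Differentiable ℝ D2 := hD2c.differentiable one_ne_zero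
  have hvd : Differentiable ℝ (deriv v) := hvc.differentiable two_ne_zero
  -- derivative of g
  have hg' : ∀ p ∈ Set.Ioo a b, HasDerivAt g ((D2 (g p))⁻¹) p := by
    intro p hp
    have hgp := (hgd p hp).hasDerivAt
    have hcomp : HasDerivAt (fun q => deriv v (g q)) (D2 (g p) * deriv g p) p :=
      ((hvd (g p)).hasDerivAt).comp p hgp
    have hid : HasDerivAt (fun q => deriv v (g q)) 1 p := by
      have heq : (fun q => deriv v (g q)) =ᶠ[nhds p] id := by
        filter_upwards [Ioo_mem_nhds hp.1 hp.2] with q hq using hvg q hq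
      exact (hasDerivAt_id p).congr_of_eventuallyEq heq
    have : D2 (g p) * deriv g p = 1 := hcomp.unique hid
    have hdg : (D2 (g p))⁻¹ = deriv g p := inv_eq_of_mul_eq_one_right this
    rw [hdg]; exact hgp
  -- the first and second derivative candidates
  set f' : ℝ → ℝ := fun p => (D2 (g p))⁻¹ * (p - cj) + g p * 1 with hf'def
  set f'' : ℝ → ℝ := fun p =>
    (-(D3 (g p) * (D2 (g p))⁻¹) / (D2 (g p)) ^ 2 * (p - cj) + (D2 (g p))⁻¹ * 1) + (D2 (g p))⁻¹
    with hf''def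
  have hIoo : interior (Set.Icc cj (cj + 1)) = Set.Ioo cj (cj + 1) := interior_Icc
  have hsub : Set.Ioo cj (cj + 1) ⊆ Set.Ioo a b := fun x hx =>
    ⟨lt_trans ha hx.1, lt_trans hx.2 hb⟩
  apply concaveOn_of_hasDerivWithinAt2_nonpos (f' := f') (f'' := f'') (convex_Icc _ _)
  · -- continuity
    apply ContinuousOn.mul
    · exact fun x hx => ((hgd x (hab hx)).continuousAt).continuousWithinAt
    · exact (continuous_id.sub continuous_const).continuousOn
  · intro x hx
    rw [hIoo] at hx
    have hx' := hsub hx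
    have : HasDerivAt (fun p => g p * (p - cj)) (f' x) x := by
      have := (hg' x hx').mul ((hasDerivAt_id x).sub_const cj)
      exact this.congr_deriv (by simp [f'])
    exact this.hasDerivWithinAt
  · intro x hx
    rw [hIoo] at hx
    have hx' := hsub hx
    have hAg : HasDerivAt (fun q => D2 (g q)) (D3 (g x) * (D2 (g x))⁻¹) x :=
      ((hD2diff (g x)).hasDerivAt).comp x (hg' x hx')
    have hinv : HasDerivAt (fun q => (D2 (g q))⁻¹)
        (-(D3 (g x) * (D2 (g x))⁻¹) / (D2 (g x)) ^ 2) x := hAg.inv (hAne (g x))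
    have h1 : HasDerivAt (fun q => (D2 (g q))⁻¹ * (q - cj))
        (-(D3 (g x) * (D2 (g x))⁻¹) / (D2 (g x)) ^ 2 * (x - cj) + (D2 (g x))⁻¹ * 1) x :=
      hinv.mul ((hasDerivAt_id x).sub_const cj)
    have h2 : HasDerivAt (fun q => g q * 1) ((D2 (g x))⁻¹) x := by
      simpa using (hg' x hx').mul_const 1
    exact (h1.add h2).hasDerivWithinAt
  · intro x hx
    rw [hIoo] at hx
    set A := D2 (g x) with hAdef
    set B := D3 (g x) with hBdef
    have hA1 : A ≤ -1 := hA (g x)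
    have hB2 : B ≤ 2 := hB (g x)
    have hAne' : A ≠ 0 := hAne (g x)
    set u := A⁻¹ with hudef
    have hu : A * u = 1 := mul_inv_cancel₀ hAne'
    have hulb : -1 ≤ u := by nlinarith
    have huneg : u < 0 := by nlinarith
    have ht0 : 0 ≤ x - cj := by linarith [hx.1]
    have ht1 : x - cj ≤ 1 := by linarith [hx.2]
    have hexp : f'' x = -(B * u) * u ^ 2 * (x - cj) + 2 * u := by
      simp only [f'']
      rw [← hAdef, ← hBdef, ← hudef]
      rw [div_eq_mul_inv, ← inv_pow]
      ring
    rw [hexp]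
    have hu3 : 0 ≤ -(u ^ 3) := by nlinarith
    have e1 : -(B * u) * u ^ 2 * (x - cj) ≤ 2 * (-(u ^ 3)) * (x - cj) := by
      nlinarith [mul_nonneg (mul_nonneg (by linarith : (0:ℝ) ≤ 2 - B) hu3) ht0]
    have e2 : 2 * (-(u ^ 3)) * (x - cj) ≤ 2 * (-(u ^ 3)) := by nlinarith
    have e3 : 2 * (-(u ^ 3)) + 2 * u ≤ 0 := by
      nlinarith [mul_nonneg (neg_nonneg.mpr huneg.le) (by nlinarith : (0:ℝ) ≤ 1 - u ^ 2)]
    linarith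




/-- The paper's Theorem 1: with `n` consumer types arriving with probabilities `w` and
`m` products with unit costs `c`, if each utility `v i j` is `C³` with `v'' ≤ -1` and
`v''' ≤ 2`, and each demand `g i j` is a differentiable local inverse of `(v i j)'` on
an open interval containing `[c j, c j + 1]`, then the expected revenue
`F p = ∑ j ∑ i, w i * g i j (p j) * (p j - c j)` is concave on the box
`∏ j [c j, c j + 1]`. -/
theorem expected_revenue_concave
    (n m : ℕ) (hn : 0 < n) (hm : 0 < m)
    (w : Fin n → ℝ) (hw : ∀ i, 0 ≤ w i) (hw1 : ∑ i, w i = 1)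
    (c : Fin m → ℝ)
    (v : Fin n → Fin m → ℝ → ℝ) (hv : ∀ i j, ContDiff ℝ 3 (v i j))
    (hv'' : ∀ i j (k : ℝ), iteratedDeriv 2 (v i j) k ≤ -1)
    (hv''' : ∀ i j (k : ℝ), iteratedDeriv 3 (v i j) k ≤ 2)
    (g : Fin n → Fin m → ℝ → ℝ)
    (hg : ∀ i j, ∃ a b : ℝ, a < c j ∧ c j + 1 < b ∧
      (∀ p ∈ Set.Ioo a b, DifferentiableAt ℝ (g i j) p) ∧
      (∀ p ∈ Set.Ioo a b, deriv (v i j) (g i j p) = p))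
    (F : (Fin m → ℝ) → ℝ)
    (hF : F = fun p => ∑ j, ∑ i, w i * g i j (p j) * (p j - c j)) :
    ConcaveOn ℝ (Set.univ.pi fun j => Set.Icc (c j) (c j + 1)) F := by
  have hbox : Convex ℝ (Set.univ.pi fun j => Set.Icc (c j) (c j + 1)) :=
    convex_pi fun j _ => convex_Icc _ _
  subst hF
  apply myConcaveOn_sum _ _ hbox
  intro j _
  apply myConcaveOn_sum _ _ hbox
  intro i _
  obtain ⟨a, b, ha, hb, hgd, hvg⟩ := hg i j
  have hφ : ConcaveOn ℝ (Set.Icc (c j) (c j + 1)) (fun q => g i j q * (q - c j)) :=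
    key (c j) (v i j) (g i j) (hv i j) (hv'' i j) (hv''' i j) a b ha hb hgd hvg
  have hcomp := hφ.comp_affineMap ((LinearMap.proj j : (Fin m → ℝ) →ₗ[ℝ] ℝ).toAffineMap)
  have hsub : (Set.univ.pi fun j => Set.Icc (c j) (c j + 1)) ⊆
      (LinearMap.proj j : (Fin m → ℝ) →ₗ[ℝ] ℝ).toAffineMap ⁻¹' Set.Icc (c j) (c j + 1) :=
    fun p hp => hp j (Set.mem_univ j)
  have hsm := ((hcomp.subset hsub hbox).smul (hw i))
  have heq : (fun p : Fin m → ℝ => w i • ((fun q => g i j q * (q - c j)) ∘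
      (LinearMap.proj j : (Fin m → ℝ) →ₗ[ℝ] ℝ).toAffineMap) p)
      = fun p : Fin m → ℝ => w i * g i j (p j) * (p j - c j) := by
    funext p
    simp [mul_assoc]
  rwa [heq] at hsm
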